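/- Fix a convergent real sequence (a_m)_{m≥0} with limit A, and a real sequence (u_m)_{m≥0} with u_0 = a_0. Define E = Σ_{m=1}^∞ (5/3)^m [(u_m - u_{m-1})^2 + (u_m - a_m)^2 + (u_{m-1} - a_m)^2]. Then E ≥ (5/8) Σ_{m=1}^∞ (5/3)^m (a_{m+1} - a_m)^2 + (5/3)(a_1 - a_0)^2. -/
import Mathlib


open scoped ENNReal

/-- lower bound for the energy of a piecewise harmonic function with
boundary data (a_m), in [0,∞]. -/
theorem stmt13 (a u : ℕ → ℝ) (A : ℝ)
    (ha : Filter.Tendsto a Filter.atTop (nhds A)) (h0 : u 0 = a 0) :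
    (∑' m : ℕ, ENNReal.ofReal (((5:ℝ)/3)^(m+1) *
        ((u (m+1) - u m)^2 + (u (m+1) - a (m+1))^2 + (u m - a (m+1))^2))) ≥
      ENNReal.ofReal ((5:ℝ)/8) *
        (∑' m : ℕ, ENNReal.ofReal (((5:ℝ)/3)^(m+1) * (a (m+2) - a (m+1))^2)) +
      ENNReal.ofReal (((5:ℝ)/3) * (a 1 - a 0)^2) := by
  set P : ℕ → ℝ≥0∞ := fun m => ENNReal.ofReal (((5:ℝ)/3)^(m+1) * (u (m+1) - a (m+1))^2)
    with hP
  set Q : ℕ → ℝ≥0∞ := fun m => ENNReal.ofReal (((5:ℝ)/3)^(m+1) * (u m - a (m+1))^2)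
    with hQ
  have hpow : ∀ m : ℕ, (0:ℝ) ≤ ((5:ℝ)/3)^m := fun m => by positivity
  have hge : ∀ m : ℕ, P m + Q m ≤ ENNReal.ofReal (((5:ℝ)/3)^(m+1) *
      ((u (m+1) - u m)^2 + (u (m+1) - a (m+1))^2 + (u m - a (m+1))^2)) := by
    intro m
    rw [hP, hQ]
    rw [← ENNReal.ofReal_add (by positivity) (by positivity)]
    apply ENNReal.ofReal_le_ofReal
    nlinarith [mul_nonneg (hpow (m+1)) (sq_nonneg (u (m+1) - u m))]
  have key : ∀ k : ℕ, ENNReal.ofReal ((5:ℝ)/8) *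
      ENNReal.ofReal (((5:ℝ)/3)^(k+1) * (a (k+2) - a (k+1))^2) ≤ P k + Q (k+1) := by
    intro k
    rw [hP, hQ, ← ENNReal.ofReal_mul (by norm_num),
      ← ENNReal.ofReal_add (by positivity) (by positivity)]
    apply ENNReal.ofReal_le_ofReal
    have h1 := hpow (k+1)
    have h2 := mul_nonneg h1 (sq_nonneg (8 * u (k+1) - 5 * a (k+2) - 3 * a (k+1)))
    have hs : ((5:ℝ)/3)^(k+1+1) = ((5:ℝ)/3)^(k+1) * (5/3) := by ring
    rw [hs]
    nlinarith [h2]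
  have hQ0 : Q 0 = ENNReal.ofReal (((5:ℝ)/3) * (a 1 - a 0)^2) := by
    rw [hQ]
    simp only [pow_one, h0]
    congr 1
    ring
  calc ENNReal.ofReal ((5:ℝ)/8) *
        (∑' m : ℕ, ENNReal.ofReal (((5:ℝ)/3)^(m+1) * (a (m+2) - a (m+1))^2)) +
      ENNReal.ofReal (((5:ℝ)/3) * (a 1 - a 0)^2)
      = (∑' k : ℕ, ENNReal.ofReal ((5:ℝ)/8) *
          ENNReal.ofReal (((5:ℝ)/3)^(k+1) * (a (k+2) - a (k+1))^2)) + Q 0 := by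
        rw [ENNReal.tsum_mul_left, hQ0]
    _ ≤ (∑' k : ℕ, (P k + Q (k+1))) + Q 0 := by
        gcongr with k
        exact key k
    _ = (∑' k : ℕ, P k) + ((∑' k : ℕ, Q (k+1)) + Q 0) := by
        rw [ENNReal.tsum_add, add_assoc]
    _ = (∑' k : ℕ, P k) + (∑' k : ℕ, Q k) := by
        have hsplit : (∑' k : ℕ, Q k) = Q 0 + ∑' k : ℕ, Q (k+1) :=
          tsum_eq_zero_add' ENNReal.summable
        rw [hsplit, add_comm (Q 0)]
    _ = ∑' m : ℕ, (P m + Q m) := (ENNReal.tsum_add).symm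
    _ ≤ _ := ENNReal.tsum_le_tsum hge
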